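/- A semigroup that embeds into a direct power L^I of L = {0,+,−} (with 0 an identity and +,− left zeros) is a left regular band satisfying condition (CC): whenever ab = a, ba = b, and a and b lie in the same connected component of the poset S_{a,b} = {s : sa = sb} (ordered by x ≤ y iff yx = x), then a = b. In particular, L itself satisfies (CC). -/

import Mathlib

/-- L = {0,+,−} with 0 an identity and +, − left zeros. -/
inductive L : Type
  | zero | pos | neg
deriving DecidableEq

instance : Mul L :=
  ⟨fun a b => match a with
    | .zero => b
    | .pos => .pos
    | .neg => .neg⟩


instance : Fintype L := ⟨{L.zero, L.pos, L.neg}, fun x => by cases x <;> decide⟩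

private lemma L_key : ∀ u v p q : L, u * p = u * q → v * p = v * q → v * u = u → p ≠ q → u = v := by
  decide

private lemma L_aux {T : Type*} [Mul T] {I : Type*} (φ : T → I → L)
    (hom : ∀ x y : T, φ (x * y) = φ x * φ y) (hinj : Function.Injective φ)
    (a b : T) (h : Relation.EqvGen
      (fun x y : T => x * a = x * b ∧ y * a = y * b ∧ y * x = x) a b) : a = b := by
  apply hinj; funext i
  by_contra hne
  have key : ∀ x y : T, x * a = x * b → y * a = y * b → y * x = x → φ x i = φ y i := by
    intro x y hx hy hyx
    have h1 : φ x i * φ a i = φ x i * φ b i := by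
      rw [← Pi.mul_apply, ← Pi.mul_apply, ← hom, ← hom, hx]
    have h2 : φ y i * φ a i = φ y i * φ b i := by
      rw [← Pi.mul_apply, ← Pi.mul_apply, ← hom, ← hom, hy]
    have h3 : φ y i * φ x i = φ x i := by
      rw [← Pi.mul_apply, ← hom, hyx]
    exact L_key _ _ _ _ h1 h2 h3 hne
  have inv : ∀ c d : T, Relation.EqvGen
      (fun x y : T => x * a = x * b ∧ y * a = y * b ∧ y * x = x) c d → φ c i = φ d i := by
    intro c d h'
    induction h' with
    | rel x y hxy => exact key x y hxy.1 hxy.2.1 hxy.2.2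
    | refl x => rfl
    | symm x y _ ih => exact ih.symm
    | trans x y z _ _ ih1 ih2 => exact ih1.trans ih2
  exact hne (inv a b h)

/-- A semigroup embedding into a direct power of L is a left regular band satisfying
condition (CC); in particular L itself satisfies (CC). -/
theorem embeds_in_power_of_L_implies_CC (S : Type*) [Semigroup S] (I : Type*)
    (φ : S → I → L) (hom : ∀ x y : S, φ (x * y) = φ x * φ y)
    (hinj : Function.Injective φ) :
    (∀ x : S, x * x = x) ∧
    (∀ x y : S, x * y * x = x * y) ∧
    (∀ a b : S, a * b = a → b * a = b →
      Relation.EqvGen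
        (fun x y : S => x * a = x * b ∧ y * a = y * b ∧ y * x = x) a b → a = b) ∧
    (∀ a b : L, a * b = a → b * a = b →
      Relation.EqvGen
        (fun x y : L => x * a = x * b ∧ y * a = y * b ∧ y * x = x) a b → a = b) := by
  have idemL : ∀ u : L, u * u = u := by decide
  have lrbL : ∀ u v : L, u * v * u = u * v := by decide
  refine ⟨?_, ?_, ?_, ?_⟩
  · intro x
    apply hinj
    rw [hom]
    funext i
    rw [Pi.mul_apply]
    exact idemL _
  · intro x y
    apply hinj
    simp only [hom]
    funext i
    simp only [Pi.mul_apply]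
    exact lrbL _ _
  · intro a b _ _ h
    exact L_aux φ hom hinj a b h
  · intro a b _ _ h
    exact L_aux (I := Unit) (fun a _ => a) (fun x y => rfl)
      (fun x y hxy => congrFun hxy ()) a b h
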